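/- Let f(x) = √(1 − x²) on [0, 1] (the quarter unit circle, intercepts L = M = 1), and let σ, τ > −1 satisfy either σ ≤ −2/5 or τ ≤ −2/5. Then for every ε ∈ (0, 1) there exists r₀ > 0 such that for all r ≥ r₀, every s ∈ S(r) satisfies either s < r^{ε−1} or s > r^{1−ε}. -/

import Mathlib

open Set Filter Asymptotics MeasureTheory

noncomputable section

/-- The negative part `x⁻ = max(−x, 0)` of a real number. -/
def nneg (x : ℝ) : ℝ := max (-x) 0

/-- The shifted-lattice counting function `N(r,s)`: the number of points of the
shifted lattice `(ℕ+σ) × (ℕ+τ)` lying inside or on the curve `rΓ(s)`. -/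
def countN (f : ℝ → ℝ) (σ τ L r s : ℝ) : ℕ :=
  Set.ncard {p : ℤ × ℤ | 1 ≤ p.1 ∧ 1 ≤ p.2 ∧ ((p.1 : ℝ) + σ) * s / r ≤ L ∧
    (p.2 : ℝ) + τ ≤ r * s * f (((p.1 : ℝ) + σ) * s / r)}

/-- The set `S(r)` of stretch factors `s > 0` maximizing `s ↦ N(r,s)`. -/
def maximizers (f : ℝ → ℝ) (σ τ L r : ℝ) : Set ℝ :=
  {s | 0 < s ∧ ∀ s' > 0, countN f σ τ L r s' ≤ countN f σ τ L r s}

lemma qc_le_one (x : ℝ) : Real.sqrt (1 - x ^ 2) ≤ 1 :=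
  Real.sqrt_le_one.mpr (by nlinarith [sq_nonneg x])

lemma qc_cont : Continuous (fun x : ℝ => Real.sqrt (1 - x ^ 2)) := by
  continuity

lemma qc_anti : AntitoneOn (fun x : ℝ => Real.sqrt (1 - x ^ 2)) (Ici 0) := by
  intro a ha b hb hab
  exact Real.sqrt_le_sqrt (by simp only [mem_Ici] at ha hb; nlinarith)

lemma qc_le_poly {x : ℝ} (h0 : 0 ≤ x) (h1 : x ≤ 1) :
    Real.sqrt (1 - x ^ 2) ≤ 1 - x ^ 2 / 2 - x ^ 4 / 8 := by
  have h : Real.sqrt (1 - x ^ 2) ≤ Real.sqrt ((1 - x ^ 2 / 2 - x ^ 4 / 8) ^ 2) :=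
    Real.sqrt_le_sqrt (by nlinarith [pow_nonneg h0 6, pow_nonneg h0 8])
  have hx2 : x ^ 2 ≤ 1 := by nlinarith
  have hx4 : x ^ 4 ≤ 1 := by nlinarith
  rwa [Real.sqrt_sq (by nlinarith)] at h

lemma integral_qc_le : ∫ x in (0:ℝ)..1, Real.sqrt (1 - x ^ 2) ≤ 97 / 120 := by
  have hpoly : ∫ x in (0:ℝ)..1, (1 - x ^ 2 / 2 - x ^ 4 / 8) = 97 / 120 := by
    have hd : ∀ x ∈ Set.uIcc (0:ℝ) 1, HasDerivAt (fun y : ℝ => y - y ^ 3 / 6 - y ^ 5 / 40)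
        (1 - x ^ 2 / 2 - x ^ 4 / 8) x := by
      intro x _
      have h1 := (hasDerivAt_pow 3 x).div_const 6
      have h2 := (hasDerivAt_pow 5 x).div_const 40
      have := ((hasDerivAt_id x).sub h1).sub h2
      exact this.congr_deriv (by push_cast; ring)
    rw [intervalIntegral.integral_eq_sub_of_hasDerivAt hd
      (by apply Continuous.intervalIntegrable; continuity)]
    norm_num
  rw [← hpoly]
  apply intervalIntegral.integral_mono_on zero_le_one
    (qc_cont.intervalIntegrable _ _)
    (by apply Continuous.intervalIntegrable; continuity)
  intro x hx
  exact qc_le_poly hx.1 hx.2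

lemma countN_box {σ τ r s : ℝ} (hr : 0 < r) (hs : 0 < s) :
    {p : ℤ × ℤ | 1 ≤ p.1 ∧ 1 ≤ p.2 ∧ ((p.1 : ℝ) + σ) * s / r ≤ 1 ∧
      (p.2 : ℝ) + τ ≤ r * s * Real.sqrt (1 - ((((p.1 : ℝ)) + σ) * s / r) ^ 2)} ⊆
    ↑(Finset.Icc (1:ℤ) ⌊r / s - σ⌋ ×ˢ Finset.Icc (1:ℤ) ⌊r * s - τ⌋) := by
  rintro ⟨j, k⟩ ⟨h1, h2, h3, h4⟩
  have hj : (j : ℝ) ≤ r / s - σ := by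
    have h3' : ((j : ℝ) + σ) * s ≤ r := (div_le_one hr).1 h3
    have : (j : ℝ) + σ ≤ r / s := (le_div_iff₀ hs).2 h3'
    linarith
  have hk : (k : ℝ) ≤ r * s - τ := by
    have hsq := qc_le_one ((((j : ℝ)) + σ) * s / r)
    nlinarith [mul_pos hr hs]
  simp only [Finset.coe_product, Set.mem_prod, Finset.mem_coe, Finset.mem_Icc]
  exact ⟨⟨h1, Int.le_floor.2 hj⟩, ⟨h2, Int.le_floor.2 hk⟩⟩

lemma sum_qc_le {σ r s : ℝ} (hσ : -1 < σ) (hr : 0 < r) (hs : 0 < s) :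
    ∑ j ∈ Finset.Icc (1:ℤ) ⌊r / s - σ⌋, Real.sqrt (1 - (((j : ℝ) + σ) * s / r) ^ 2)
      ≤ 1 + r / s * (97 / 120) := by
  set J : ℤ := ⌊r / s - σ⌋ with hJdef
  have hJle : (J : ℝ) ≤ r / s - σ := Int.floor_le _
  clear_value J
  rcases lt_or_ge J 1 with hJ | hJ
  · rw [Finset.Icc_eq_empty (by exact_mod_cast not_le.2 hJ), Finset.sum_empty]
    positivity
  · obtain ⟨n, hJn⟩ : ∃ n : ℕ, J = 1 + (n : ℤ) := ⟨(J - 1).toNat, by omega⟩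
    have hJnR : (J : ℝ) = 1 + (n : ℝ) := by exact_mod_cast hJn
    have hIcc : Finset.Icc (1:ℤ) J =
        (Finset.range (n + 1)).map ⟨fun i : ℕ => 1 + (i : ℤ), show Function.Injective (fun i : ℕ => 1 + (i : ℤ)) from fun a b h => by dsimp only at h; omega⟩ := by
      ext x
      simp only [Finset.mem_Icc, Finset.mem_map, Finset.mem_range, Function.Embedding.coeFn_mk]
      constructor
      · intro hx
        exact ⟨(x - 1).toNat, by omega, by omega⟩
      · rintro ⟨i, hi, rfl⟩
        omega
    rw [hIcc, Finset.sum_map]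
    simp only [Function.Embedding.coeFn_mk]
    rw [Finset.sum_range_succ']
    set G : ℝ → ℝ := fun u => Real.sqrt (1 - ((u + σ) * s / r) ^ 2) with hG
    have hterm1 : Real.sqrt (1 - ((((1 + ((0:ℕ):ℤ) : ℤ) : ℝ) + σ) * s / r) ^ 2) ≤ 1 := by
      push_cast
      exact qc_le_one _
    have hre : ∑ i ∈ Finset.range n,
        Real.sqrt (1 - ((((1 + ((i+1:ℕ):ℤ) : ℤ) : ℝ) + σ) * s / r) ^ 2)
        = ∑ i ∈ Finset.range n, G ((1:ℝ) + ((i + 1 : ℕ) : ℝ)) := by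
      refine Finset.sum_congr rfl fun i _ => ?_
      rw [hG]
      push_cast
      norm_num
    have hanti : AntitoneOn G (Icc (1:ℝ) (1 + (n:ℝ))) := by
      intro a ha b hb hab
      simp only [hG]
      have ha1 : (1:ℝ) ≤ a := ha.1
      have hxa : 0 ≤ (a + σ) * s / r := by
        apply div_nonneg (mul_nonneg (by linarith) hs.le) hr.le
      have hxab : (a + σ) * s / r ≤ (b + σ) * s / r := by
        gcongr
      exact Real.sqrt_le_sqrt (by nlinarith)
    have hint := hanti.sum_le_integral
    have hG2 : ∀ x : ℝ, G x = Real.sqrt (1 - ((s/r) * x + σ * (s/r)) ^ 2) := by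
      intro x
      simp only [hG]
      congr 1
      ring
    have hintegral : (∫ x in (1:ℝ)..(1 + (n:ℝ)), G x) ≤ r / s * (97 / 120) := by
      have hsr : (0:ℝ) < s / r := div_pos hs hr
      calc (∫ x in (1:ℝ)..(1 + (n:ℝ)), G x)
          = ∫ x in (1:ℝ)..(1 + (n:ℝ)), Real.sqrt (1 - ((s/r) * x + σ * (s/r)) ^ 2) := by
            simp only [hG2]
        _ = (s/r)⁻¹ • ∫ y in ((s/r) * 1 + σ * (s/r))..((s/r) * (1 + (n:ℝ)) + σ * (s/r)),
              Real.sqrt (1 - y ^ 2) :=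
            intervalIntegral.integral_comp_mul_add (fun y => Real.sqrt (1 - y ^ 2)) hsr.ne' _
        _ ≤ (s/r)⁻¹ * (97/120) := by
            rw [smul_eq_mul]
            apply mul_le_mul_of_nonneg_left ?_ (inv_nonneg.2 hsr.le)
            have hb1 : (s/r) * (1 + (n:ℝ)) + σ * (s/r) ≤ 1 := by
              have h1 : (1 + (n:ℝ)) + σ ≤ r / s := by rw [← hJnR]; linarith
              have h2 : ((1 + (n:ℝ)) + σ) * (s/r) ≤ (r/s) * (s/r) :=
                mul_le_mul_of_nonneg_right h1 hsr.le
              have h3 : (r/s) * (s/r) = 1 := by field_simp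
              nlinarith
            calc (∫ y in ((s/r) * 1 + σ * (s/r))..((s/r) * (1 + (n:ℝ)) + σ * (s/r)),
                  Real.sqrt (1 - y ^ 2))
                ≤ ∫ y in (0:ℝ)..1, Real.sqrt (1 - y ^ 2) := by
                  apply intervalIntegral.integral_mono_interval (c := 0) (d := 1)
                  · have : 0 ≤ (1 + σ) * (s/r) := mul_nonneg (by linarith) hsr.le
                    nlinarith
                  · apply add_le_add_left
                    apply mul_le_mul_of_nonneg_left ?_ hsr.le
                    simp
                  · exact hb1
                  · exact Filter.Eventually.of_forall fun y => Real.sqrt_nonneg _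
                  · exact qc_cont.intervalIntegrable _ _
              _ ≤ 97/120 := integral_qc_le
        _ = r / s * (97/120) := by rw [inv_div]
    rw [hre]
    linarith [hint, hintegral, hterm1]

lemma toNat_cast_le {m : ℤ} {c : ℝ} (h : (m : ℝ) ≤ c) (hc : 0 ≤ c) :
    ((m.toNat : ℕ) : ℝ) ≤ c := by
  rcases le_or_gt m 0 with hm | hm
  · rw [Int.toNat_of_nonpos hm]
    simpa using hc
  · have h1 : (m.toNat : ℤ) = m := Int.toNat_of_nonneg hm.le
    have h2 : ((m.toNat : ℕ) : ℝ) = (m : ℝ) := by exact_mod_cast congrArg (fun z : ℤ => (z : ℝ)) h1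
    rw [h2]; exact h

lemma card_Icc_le {m : ℤ} {c : ℝ} (h : (m : ℝ) ≤ c) (hc : 0 ≤ c) :
    ((Finset.Icc (1:ℤ) m).card : ℝ) ≤ c := by
  rw [Int.card_Icc]
  have he : ((m + 1 - 1) : ℤ) = m := by ring
  rw [he]
  exact toNat_cast_le h hc

lemma countN_upper {σ τ r s : ℝ} (hσ : -1 < σ) (hτ : -1 < τ) (hr : 0 < r) (hs : 0 < s) :
    (countN (fun x => Real.sqrt (1 - x ^ 2)) σ τ 1 r s : ℝ)
      ≤ 97 / 120 * r ^ 2 + r * s + r / s + 1 := by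
  classical
  have hsub := countN_box (σ := σ) (τ := τ) hr hs
  set S : Set (ℤ × ℤ) := {p : ℤ × ℤ | 1 ≤ p.1 ∧ 1 ≤ p.2 ∧ ((p.1 : ℝ) + σ) * s / r ≤ 1 ∧
      (p.2 : ℝ) + τ ≤ r * s * Real.sqrt (1 - ((((p.1 : ℝ)) + σ) * s / r) ^ 2)} with hSdef
  have hfin : S.Finite := Set.Finite.subset (Finset.finite_toSet _) hsub
  have hcount : countN (fun x => Real.sqrt (1 - x ^ 2)) σ τ 1 r s = hfin.toFinset.card := by
    rw [countN]
    exact Set.ncard_eq_toFinset_card _ hfin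
  rw [hcount]
  have hmem : ∀ p ∈ hfin.toFinset, p.1 ∈ Finset.Icc (1:ℤ) ⌊r / s - σ⌋ := by
    intro p hp
    have := hsub (hfin.mem_toFinset.1 hp)
    simp only [Finset.coe_product, Set.mem_prod, Finset.mem_coe] at this
    exact this.1
  rw [Finset.card_eq_sum_card_fiberwise hmem]
  have hfiber : ∀ j ∈ Finset.Icc (1:ℤ) ⌊r / s - σ⌋,
      ((hfin.toFinset.filter (fun p => p.1 = j)).card : ℝ)
        ≤ r * s * Real.sqrt (1 - (((j : ℝ) + σ) * s / r) ^ 2) + 1 := by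
    intro j hj
    set y : ℝ := r * s * Real.sqrt (1 - (((j : ℝ) + σ) * s / r) ^ 2) with hy
    have hynn : 0 ≤ y := by
      rw [hy]; positivity
    have hcard : (hfin.toFinset.filter (fun p => p.1 = j)).card
        ≤ (Finset.Icc (1:ℤ) ⌊y - τ⌋).card := by
      apply Finset.card_le_card_of_injOn (fun p => p.2)
      · intro p hp
        simp only [Finset.mem_coe, Finset.mem_filter] at hp
        obtain ⟨hpS, hpj⟩ := hp
        obtain ⟨h1, h2, h3, h4⟩ := hfin.mem_toFinset.1 hpS
        simp only [Finset.mem_coe, Finset.mem_Icc]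
        refine ⟨h2, Int.le_floor.2 ?_⟩
        rw [hpj] at h4
        rw [hy]
        push_cast
        linarith
      · intro p hp q hq hpq
        simp only [Finset.mem_coe, Finset.mem_filter] at hp hq
        exact Prod.ext (hp.2.trans hq.2.symm) hpq
    calc ((hfin.toFinset.filter (fun p => p.1 = j)).card : ℝ)
        ≤ ((Finset.Icc (1:ℤ) ⌊y - τ⌋).card : ℝ) := by exact_mod_cast hcard
      _ ≤ y + 1 := by
          apply card_Icc_le ?_ (by linarith)
          have := Int.floor_le (y - τ)
          linarith
  calc ((∑ j ∈ Finset.Icc (1:ℤ) ⌊r / s - σ⌋,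
          (hfin.toFinset.filter (fun p => p.1 = j)).card : ℕ) : ℝ)
      = ∑ j ∈ Finset.Icc (1:ℤ) ⌊r / s - σ⌋,
          ((hfin.toFinset.filter (fun p => p.1 = j)).card : ℝ) := by push_cast; rfl
    _ ≤ ∑ j ∈ Finset.Icc (1:ℤ) ⌊r / s - σ⌋,
          (r * s * Real.sqrt (1 - (((j : ℝ) + σ) * s / r) ^ 2) + 1) :=
        Finset.sum_le_sum hfiber
    _ = r * s * (∑ j ∈ Finset.Icc (1:ℤ) ⌊r / s - σ⌋,
          Real.sqrt (1 - (((j : ℝ) + σ) * s / r) ^ 2))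
        + ((Finset.Icc (1:ℤ) ⌊r / s - σ⌋).card : ℝ) := by
        rw [Finset.sum_add_distrib, Finset.mul_sum, Finset.sum_const, nsmul_eq_mul, mul_one]
    _ ≤ r * s * (1 + r / s * (97 / 120)) + (r / s + 1) := by
        have h1 := sum_qc_le hσ hr hs (s := s)
        have h2 : ((Finset.Icc (1:ℤ) ⌊r / s - σ⌋).card : ℝ) ≤ r / s + 1 := by
          have h0 : 0 < r / s := div_pos hr hs
          apply card_Icc_le ?_ (by linarith)
          have := Int.floor_le (r / s - σ)
          linarith
        have hrs : 0 ≤ r * s := (mul_pos hr hs).le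
        nlinarith
    _ ≤ 97 / 120 * r ^ 2 + r * s + r / s + 1 := by
        have : r * s * (r / s) = r ^ 2 := by field_simp
        nlinarith

lemma countN_lower_tau {σ τ r : ℝ} (hσ : -1 < σ) (hτ : -1 < τ) (hr : 0 < r) {m : ℤ} (hm : 1 ≤ m)
    (hmle : (m : ℝ) + σ ≤ 420 / 841 * r ^ 2 / (1 + τ)) :
    m.toNat ≤ countN (fun x => Real.sqrt (1 - x ^ 2)) σ τ 1 r (29 / 21 * (1 + τ) / r) := by
  have hτ1 : (0:ℝ) < 1 + τ := by linarith
  set s : ℝ := 29 / 21 * (1 + τ) / r with hsdef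
  have hs : 0 < s := by positivity
  set S : Set (ℤ × ℤ) := {p : ℤ × ℤ | 1 ≤ p.1 ∧ 1 ≤ p.2 ∧ ((p.1 : ℝ) + σ) * s / r ≤ 1 ∧
      (p.2 : ℝ) + τ ≤ r * s * Real.sqrt (1 - ((((p.1 : ℝ)) + σ) * s / r) ^ 2)} with hSdef
  have hfin : S.Finite := Set.Finite.subset (Finset.finite_toSet _) (countN_box hr hs)
  have hrs : r * s = 29 / 21 * (1 + τ) := by
    rw [hsdef]; field_simp
  have hsub : ((Finset.Icc (1:ℤ) m).image (fun j => (j, (1:ℤ))) : Finset (ℤ × ℤ)) ⊆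
      hfin.toFinset := by
    intro p hp
    simp only [Finset.mem_image, Finset.mem_Icc] at hp
    obtain ⟨j, ⟨hj1, hjm⟩, rfl⟩ := hp
    rw [Set.Finite.mem_toFinset, hSdef]
    have hj0 : (0:ℝ) < (j : ℝ) + σ := by
      have : (1:ℝ) ≤ (j:ℝ) := by exact_mod_cast hj1
      linarith
    have hjle : (j : ℝ) + σ ≤ 420 / 841 * r ^ 2 / (1 + τ) := by
      have : (j:ℝ) ≤ (m:ℝ) := by exact_mod_cast hjm
      linarith
    have hxle : ((j : ℝ) + σ) * s / r ≤ 20 / 29 := by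
      have h1 : ((j : ℝ) + σ) * s / r ≤ (420 / 841 * r ^ 2 / (1 + τ)) * s / r := by
        gcongr
      have h2 : (420 / 841 * r ^ 2 / (1 + τ)) * s / r = 20 / 29 := by
        rw [hsdef]; field_simp; ring
      linarith
    have hx0 : 0 ≤ ((j : ℝ) + σ) * s / r := by positivity
    have hsqrt : (21/29 : ℝ) ≤ Real.sqrt (1 - (((j : ℝ) + σ) * s / r) ^ 2) := by
      have h3 : ((21:ℝ)/29) = Real.sqrt ((21/29)^2) := (Real.sqrt_sq (by norm_num)).symm
      rw [h3]
      apply Real.sqrt_le_sqrt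
      nlinarith
    refine ⟨hj1, le_refl 1, by linarith, ?_⟩
    push_cast
    rw [hrs]
    nlinarith
  have hcards : ((Finset.Icc (1:ℤ) m).image (fun j => (j, (1:ℤ)))).card = m.toNat := by
    rw [Finset.card_image_of_injective _ (fun a b h => (Prod.ext_iff.1 h).1),
      Int.card_Icc]
    congr 1
    ring
  calc m.toNat = ((Finset.Icc (1:ℤ) m).image (fun j => (j, (1:ℤ)))).card := hcards.symm
    _ ≤ hfin.toFinset.card := Finset.card_le_card hsub
    _ = S.ncard := (Set.ncard_eq_toFinset_card _ hfin).symm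
    _ = countN (fun x => Real.sqrt (1 - x ^ 2)) σ τ 1 r s := by rw [countN]

lemma countN_lower_sigma {σ τ r : ℝ} (hσ : -1 < σ) (hτ : -1 < τ) (hr : 0 < r) {m : ℤ} (hm : 1 ≤ m)
    (hmle : (m : ℝ) + τ ≤ 420 / 841 * r ^ 2 / (1 + σ)) :
    m.toNat ≤ countN (fun x => Real.sqrt (1 - x ^ 2)) σ τ 1 r (20 / 29 * r / (1 + σ)) := by
  have hσ1 : (0:ℝ) < 1 + σ := by linarith
  set s : ℝ := 20 / 29 * r / (1 + σ) with hsdef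
  have hs : 0 < s := by positivity
  set S : Set (ℤ × ℤ) := {p : ℤ × ℤ | 1 ≤ p.1 ∧ 1 ≤ p.2 ∧ ((p.1 : ℝ) + σ) * s / r ≤ 1 ∧
      (p.2 : ℝ) + τ ≤ r * s * Real.sqrt (1 - ((((p.1 : ℝ)) + σ) * s / r) ^ 2)} with hSdef
  have hfin : S.Finite := Set.Finite.subset (Finset.finite_toSet _) (countN_box hr hs)
  have hx1 : (((1:ℤ) : ℝ) + σ) * s / r = 20 / 29 := by
    push_cast
    rw [hsdef]
    field_simp
  have hsqrt : Real.sqrt (1 - (20/29 : ℝ) ^ 2) = 21 / 29 := by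
    rw [show (1 - (20/29:ℝ)^2) = (21/29)^2 by norm_num, Real.sqrt_sq (by norm_num)]
  have hrsf : r * s * Real.sqrt (1 - ((((1:ℤ) : ℝ) + σ) * s / r) ^ 2)
      = 420 / 841 * r ^ 2 / (1 + σ) := by
    rw [hx1, hsqrt, hsdef]
    field_simp
    ring
  have hsub : ((Finset.Icc (1:ℤ) m).image (fun k => ((1:ℤ), k)) : Finset (ℤ × ℤ)) ⊆
      hfin.toFinset := by
    intro p hp
    simp only [Finset.mem_image, Finset.mem_Icc] at hp
    obtain ⟨k, ⟨hk1, hkm⟩, rfl⟩ := hp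
    rw [Set.Finite.mem_toFinset, hSdef]
    have hkm' : (k:ℝ) ≤ (m:ℝ) := by exact_mod_cast hkm
    refine ⟨le_refl 1, hk1, by rw [hx1]; norm_num, ?_⟩
    rw [hrsf]
    linarith
  have hcards : ((Finset.Icc (1:ℤ) m).image (fun k => ((1:ℤ), k))).card = m.toNat := by
    rw [Finset.card_image_of_injective _ (fun a b h => (Prod.ext_iff.1 h).2),
      Int.card_Icc]
    congr 1
    ring
  calc m.toNat = ((Finset.Icc (1:ℤ) m).image (fun k => ((1:ℤ), k))).card := hcards.symm
    _ ≤ hfin.toFinset.card := Finset.card_le_card hsub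
    _ = S.ncard := (Set.ncard_eq_toFinset_card _ hfin).symm
    _ = countN (fun x => Real.sqrt (1 - x ^ 2)) σ τ 1 r s := by rw [countN]

/-- Negative shift: the optimal ellipse can degenerate. For the quarter unit circle
`f(x) = √(1−x²)` (intercepts `L = M = 1`) and shifts `σ, τ > −1` with `σ ≤ −2/5` or
`τ ≤ −2/5`, for each `ε ∈ (0,1)` one has `S(r) ⊂ (0, r^{ε−1}) ∪ (r^{1−ε}, ∞)` for all
large `r`. -/
theorem optimal_ellipse_degenerates (σ τ : ℝ)
    (hσ : -1 < σ) (hτ : -1 < τ) (hneg : σ ≤ -(2 / 5) ∨ τ ≤ -(2 / 5)) :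
    ∀ ε ∈ Ioo (0 : ℝ) 1, ∃ r₀ > (0 : ℝ), ∀ r ≥ r₀,
      ∀ s ∈ maximizers (fun x => Real.sqrt (1 - x ^ 2)) σ τ 1 r,
        s < r ^ (ε - 1) ∨ s > r ^ (1 - ε) := by
  intro ε hε
  obtain ⟨hε0, hε1⟩ := hε
  set C : ℝ := |σ| + |τ| + 5 with hC
  have hC5 : (5:ℝ) ≤ C := by
    rw [hC]
    have := abs_nonneg σ
    have := abs_nonneg τ
    linarith
  refine ⟨max ((200:ℝ) ^ (ε⁻¹)) (10 * C), ?_, ?_⟩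
  · exact lt_max_iff.2 (Or.inl (Real.rpow_pos_of_pos (by norm_num) _))
  intro r hr s hsmax
  have hrC : 10 * C ≤ r := le_trans (le_max_right _ _) hr
  have hr0 : (0:ℝ) < r := by linarith
  have hr200' : (200:ℝ) ^ (ε⁻¹) ≤ r := le_trans (le_max_left _ _) hr
  have hr2ε : (200:ℝ) ≤ r ^ ε := by
    have h1 : ((200:ℝ) ^ (ε⁻¹)) ^ ε ≤ r ^ ε :=
      Real.rpow_le_rpow (Real.rpow_pos_of_pos (by norm_num) _).le hr200' hε0.le
    have h2 : ((200:ℝ) ^ (ε⁻¹)) ^ ε = 200 := by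
      rw [← Real.rpow_mul (by norm_num : (0:ℝ) ≤ 200), inv_mul_cancel₀ hε0.ne', Real.rpow_one]
    linarith
  by_contra hcon
  push_neg at hcon
  obtain ⟨hs1, hs2⟩ := hcon
  obtain ⟨hs0, hsm⟩ := hsmax
  -- mid-range bounds
  have hXnn : (0:ℝ) ≤ r ^ ((2:ℝ) - ε) := (Real.rpow_pos_of_pos hr0 _).le
  have hrs_le : r * s ≤ r ^ ((2:ℝ) - ε) := by
    have h1 : r * s ≤ r * r ^ (1 - ε) := mul_le_mul_of_nonneg_left hs2 hr0.le
    have h2 : r ^ ((1:ℝ) + (1 - ε)) = r ^ (1:ℝ) * r ^ (1 - ε) := Real.rpow_add hr0 _ _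
    rw [Real.rpow_one] at h2
    rw [show (1:ℝ) + (1 - ε) = 2 - ε by ring] at h2
    linarith
  have hdivs_le : r / s ≤ r ^ ((2:ℝ) - ε) := by
    have hp : (0:ℝ) < r ^ (ε - 1) := Real.rpow_pos_of_pos hr0 _
    have h1 : r / s ≤ r / r ^ (ε - 1) := div_le_div_of_nonneg_left hr0.le hp hs1
    have h2 : r ^ ((1:ℝ) - (ε - 1)) = r ^ (1:ℝ) / r ^ (ε - 1) := Real.rpow_sub hr0 _ _
    rw [Real.rpow_one] at h2
    rw [show (1:ℝ) - (ε - 1) = 2 - ε by ring] at h2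
    linarith
  have hr2e : 200 * r ^ ((2:ℝ) - ε) ≤ r ^ 2 := by
    have h1 : r ^ ((2:ℝ) - ε) * r ^ ε = r ^ (2:ℝ) := by
      rw [← Real.rpow_add hr0]
      norm_num
    have h2 : r ^ (2:ℝ) = r ^ (2:ℕ) := by
      rw [← Real.rpow_natCast r 2]
      norm_num
    have h3 := mul_le_mul_of_nonneg_right hr2ε hXnn
    rw [← h2, ← h1]
    linarith [h3]
  have hr50 : (50:ℝ) ≤ r := by linarith
  have hrr : 50 * r ≤ r ^ 2 := by nlinarith
  have hCr : C ≤ r / 10 := by linarith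
  have hup := countN_upper hσ hτ hr0 hs0
  -- lower bound via the degenerate stretch, in both cases
  have hkey : 700 / 841 * r ^ 2 - C - 1 ≤ (countN (fun x => Real.sqrt (1 - x ^ 2)) σ τ 1 r s : ℝ) := by
    rcases hneg with hng | hng
    · -- σ ≤ -2/5 : use the thin vertical column
      have hσ35 : 1 + σ ≤ 3 / 5 := by linarith
      have hσ1 : (0:ℝ) < 1 + σ := by linarith
      have hq : 700 / 841 * r ^ 2 ≤ 420 / 841 * r ^ 2 / (1 + σ) := by
        have h1 : 420 / 841 * r ^ 2 / (3/5) ≤ 420 / 841 * r ^ 2 / (1 + σ) :=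
          div_le_div_of_nonneg_left (by positivity) hσ1 hσ35
        have h2 : 420 / 841 * r ^ 2 / (3/5 : ℝ) = 700 / 841 * r ^ 2 := by ring
        linarith
      have hτC : τ ≤ C := by
        have := le_abs_self τ
        have := abs_nonneg σ
        rw [hC]; linarith
      set m : ℤ := ⌊420 / 841 * r ^ 2 / (1 + σ) - τ⌋ with hm
      have hm1 : (1:ℤ) ≤ m := by
        apply Int.le_floor.2
        push_cast
        linarith
      have hmle : (m:ℝ) + τ ≤ 420 / 841 * r ^ 2 / (1 + σ) := by
        have := Int.floor_le (420 / 841 * r ^ 2 / (1 + σ) - τ)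
        linarith
      have hmge : 700 / 841 * r ^ 2 - τ - 1 ≤ (m:ℝ) := by
        have := Int.sub_one_lt_floor (420 / 841 * r ^ 2 / (1 + σ) - τ)
        linarith
      have hlow := countN_lower_sigma hσ hτ hr0 hm1 hmle
      have hmax := hsm (20 / 29 * r / (1 + σ)) (by positivity)
      have hcast : ((m.toNat : ℕ) : ℝ) = (m : ℝ) := by
        have h1 : (m.toNat : ℤ) = m := Int.toNat_of_nonneg (by omega)
        exact_mod_cast congrArg (fun z : ℤ => (z : ℝ)) h1
      have hchain : (m:ℝ) ≤ (countN (fun x => Real.sqrt (1 - x ^ 2)) σ τ 1 r s : ℝ) := by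
        rw [← hcast]
        exact_mod_cast hlow.trans hmax
      have : -C ≤ -τ := by linarith
      linarith
    · -- τ ≤ -2/5 : use the thin horizontal row
      have hτ35 : 1 + τ ≤ 3 / 5 := by linarith
      have hτ1 : (0:ℝ) < 1 + τ := by linarith
      have hq : 700 / 841 * r ^ 2 ≤ 420 / 841 * r ^ 2 / (1 + τ) := by
        have h1 : 420 / 841 * r ^ 2 / (3/5) ≤ 420 / 841 * r ^ 2 / (1 + τ) :=
          div_le_div_of_nonneg_left (by positivity) hτ1 hτ35
        have h2 : 420 / 841 * r ^ 2 / (3/5 : ℝ) = 700 / 841 * r ^ 2 := by ring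
        linarith
      have hσC : σ ≤ C := by
        have := le_abs_self σ
        have := abs_nonneg τ
        rw [hC]; linarith
      set m : ℤ := ⌊420 / 841 * r ^ 2 / (1 + τ) - σ⌋ with hm
      have hm1 : (1:ℤ) ≤ m := by
        apply Int.le_floor.2
        push_cast
        linarith
      have hmle : (m:ℝ) + σ ≤ 420 / 841 * r ^ 2 / (1 + τ) := by
        have := Int.floor_le (420 / 841 * r ^ 2 / (1 + τ) - σ)
        linarith
      have hmge : 700 / 841 * r ^ 2 - σ - 1 ≤ (m:ℝ) := by
        have := Int.sub_one_lt_floor (420 / 841 * r ^ 2 / (1 + τ) - σ)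
        linarith
      have hlow := countN_lower_tau hσ hτ hr0 hm1 hmle
      have hmax := hsm (29 / 21 * (1 + τ) / r) (by positivity)
      have hcast : ((m.toNat : ℕ) : ℝ) = (m : ℝ) := by
        have h1 : (m.toNat : ℤ) = m := Int.toNat_of_nonneg (by omega)
        exact_mod_cast congrArg (fun z : ℤ => (z : ℝ)) h1
      have hchain : (m:ℝ) ≤ (countN (fun x => Real.sqrt (1 - x ^ 2)) σ τ 1 r s : ℝ) := by
        rw [← hcast]
        exact_mod_cast hlow.trans hmax
      have : -C ≤ -σ := by linarith
      linarith
  linarith
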